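/- If α, β ∈ (0,1) with α + β > 1, then sup over n of the maximum of μ_α(𝒜)·μ_β(ℬ) over cross-intersecting families 𝒜, ℬ ⊆ 2^{[n]} equals 1. In particular, for every ε > 0 there exist n and cross-intersecting 𝒜, ℬ ⊆ 2^{[n]} with μ_α(𝒜)·μ_β(ℬ) > 1 − ε. -/

import Mathlib

open Finset

def mu (n : ℕ) (p : ℝ) (F : Finset (Finset ℕ)) : ℝ :=
  ∑ A ∈ F, p ^ A.card * (1 - p) ^ (n - A.card)

def crossProdSet (n : ℕ) (α β : ℝ) : Set ℝ :=
  {x | ∃ A B : Finset (Finset ℕ),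
    A ⊆ (Finset.Icc 1 n).powerset ∧ B ⊆ (Finset.Icc 1 n).powerset ∧
    (∀ a ∈ A, ∀ b ∈ B, (a ∩ b).Nonempty) ∧ x = mu n α A * mu n β B}


lemma sum_w (p : ℝ) (U : Finset ℕ) :
    ∑ F ∈ U.powerset, p ^ F.card * (1-p) ^ (U.card - F.card) = 1 := by
  induction U using Finset.induction_on with
  | empty => simp
  | insert a s ha ih =>
    rw [Finset.sum_powerset_insert ha]
    have h1 : ∀ F ∈ s.powerset, p ^ F.card * (1-p) ^ ((insert a s).card - F.card)
        = (1-p) * (p ^ F.card * (1-p) ^ (s.card - F.card)) := by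
      intro F hF
      rw [Finset.mem_powerset] at hF
      have := Finset.card_le_card hF
      rw [Finset.card_insert_of_notMem ha]
      rw [show s.card + 1 - F.card = (s.card - F.card) + 1 by omega, pow_succ]
      ring
    have h2 : ∀ F ∈ s.powerset, p ^ (insert a F).card * (1-p) ^ ((insert a s).card - (insert a F).card)
        = p * (p ^ F.card * (1-p) ^ (s.card - F.card)) := by
      intro F hF
      rw [Finset.mem_powerset] at hF
      have := Finset.card_le_card hF
      have haF : a ∉ F := fun h => ha (hF h)
      rw [Finset.card_insert_of_notMem ha, Finset.card_insert_of_notMem haF]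
      rw [show s.card + 1 - (F.card + 1) = s.card - F.card by omega, pow_succ]
      ring
    rw [Finset.sum_congr rfl h1, Finset.sum_congr rfl h2, ← Finset.mul_sum, ← Finset.mul_sum, ih]
    ring

lemma sum_powerset_union_mul (S T : Finset ℕ) (h : Disjoint S T) (f g : Finset ℕ → ℝ) :
    ∑ F ∈ (S ∪ T).powerset, f (F ∩ S) * g (F ∩ T)
      = (∑ A ∈ S.powerset, f A) * (∑ B ∈ T.powerset, g B) := by
  rw [Finset.sum_mul_sum, ← Finset.sum_product']
  apply Finset.sum_nbij' (fun F => (F ∩ S, F ∩ T)) (fun q => q.1 ∪ q.2)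
  · intro F hF
    simp only [Finset.mem_product, Finset.mem_powerset]
    exact ⟨Finset.inter_subset_right, Finset.inter_subset_right⟩
  · intro q hq
    simp only [Finset.mem_product, Finset.mem_powerset] at hq ⊢
    exact Finset.union_subset_union hq.1 hq.2
  · intro F hF
    rw [Finset.mem_powerset] at hF
    rw [← Finset.inter_union_distrib_left, Finset.inter_eq_left.2 hF]
  · intro q hq
    simp only [Finset.mem_product, Finset.mem_powerset] at hq
    have d1 : Disjoint q.2 S := (h.symm.mono_left hq.2)
    have d2 : Disjoint q.1 T := (h.mono_left hq.1)
    have h1 : (q.1 ∪ q.2) ∩ S = q.1 := by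
      rw [Finset.union_inter_distrib_right, Finset.inter_eq_left.2 hq.1,
        Finset.disjoint_iff_inter_eq_empty.1 d1, Finset.union_empty]
    have h2 : (q.1 ∪ q.2) ∩ T = q.2 := by
      rw [Finset.union_inter_distrib_right, Finset.inter_eq_left.2 hq.2,
        Finset.disjoint_iff_inter_eq_empty.1 d2, Finset.empty_union]
    simp [h1, h2]
  · intro F hF; rfl

def muP (p : ℝ) (U : Finset ℕ) (P : Finset ℕ → Prop) [DecidablePred P] : ℝ :=
  ∑ F ∈ U.powerset.filter P, p ^ F.card * (1-p) ^ (U.card - F.card)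

lemma muP_union (p : ℝ) (S T : Finset ℕ) (h : Disjoint S T)
    (P Q : Finset ℕ → Prop) [DecidablePred P] [DecidablePred Q] :
    muP p (S ∪ T) (fun F => P (F ∩ S) ∧ Q (F ∩ T)) = muP p S P * muP p T Q := by
  simp only [muP, Finset.sum_filter]
  rw [← sum_powerset_union_mul S T h
    (fun A => if P A then p ^ A.card * (1-p) ^ (S.card - A.card) else 0)
    (fun B => if Q B then p ^ B.card * (1-p) ^ (T.card - B.card) else 0)]
  apply Finset.sum_congr rfl
  intro F hF
  rw [Finset.mem_powerset] at hF
  have hFeq : (F ∩ S) ∪ (F ∩ T) = F := by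
    rw [← Finset.inter_union_distrib_left, Finset.inter_eq_left.2 hF]
  have hd : Disjoint (F ∩ S) (F ∩ T) :=
    h.mono Finset.inter_subset_right Finset.inter_subset_right
  have hcard : (F ∩ S).card + (F ∩ T).card = F.card := by
    rw [← Finset.card_union_of_disjoint hd, hFeq]
  have hUcard : (S ∪ T).card = S.card + T.card := Finset.card_union_of_disjoint h
  have ha : (F ∩ S).card ≤ S.card := Finset.card_le_card Finset.inter_subset_right
  have hb : (F ∩ T).card ≤ T.card := Finset.card_le_card Finset.inter_subset_right
  by_cases h1 : P (F ∩ S) <;> by_cases h2 : Q (F ∩ T) <;>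
    simp only [h1, h2, if_true, if_false, and_true, and_false, true_and, false_and,
      mul_zero, zero_mul]
  rw [← hcard, hUcard,
    show S.card + T.card - ((F ∩ S).card + (F ∩ T).card)
      = (S.card - (F ∩ S).card) + (T.card - (F ∩ T).card) by omega,
    pow_add, pow_add]
  ring

lemma muP_congr (p : ℝ) (U : Finset ℕ) (P Q : Finset ℕ → Prop) [DecidablePred P]
    [DecidablePred Q] (h : ∀ F, P F ↔ Q F) : muP p U P = muP p U Q := by
  simp only [muP]
  rw [Finset.filter_congr (fun x _ => h x)]

lemma muP_add_not (p : ℝ) (U : Finset ℕ) (P : Finset ℕ → Prop) [DecidablePred P] :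
    muP p U P + muP p U (fun F => ¬ P F) = 1 := by
  simp only [muP]
  rw [Finset.sum_filter_add_sum_filter_not, sum_w]

lemma muP_blocks (p : ℝ) (S : ℕ → Finset ℕ) (P : ℕ → Finset ℕ → Prop)
    [∀ i, DecidablePred (P i)] (s : Finset ℕ) (hd : (s : Set ℕ).PairwiseDisjoint S) :
    muP p (s.biUnion S) (fun F => ∀ i ∈ s, P i (F ∩ S i)) = ∏ i ∈ s, muP p (S i) (P i) := by
  induction s using Finset.induction_on with
  | empty => simp [muP]
  | insert a t ha ih =>
    have hd' : (t : Set ℕ).PairwiseDisjoint S :=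
      hd.subset (by exact_mod_cast Finset.subset_insert a t)
    have hdis : Disjoint (S a) (t.biUnion S) := by
      rw [Finset.disjoint_biUnion_right]
      intro i hi
      exact hd (Finset.mem_insert_self a t) (Finset.mem_insert_of_mem hi)
        (fun he => ha (he ▸ hi))
    rw [Finset.biUnion_insert]
    have heq : ∀ F : Finset ℕ, (∀ i ∈ insert a t, P i (F ∩ S i)) ↔
        (P a (F ∩ S a) ∧ ∀ i ∈ t, P i ((F ∩ t.biUnion S) ∩ S i)) := by
      intro F
      rw [Finset.forall_mem_insert]
      refine and_congr_right fun _ => ⟨fun h i hi => ?_, fun h i hi => ?_⟩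
      · rw [Finset.inter_assoc, Finset.inter_eq_right.2 (Finset.subset_biUnion_of_mem S hi)]
        exact h i hi
      · have := h i hi
        rwa [Finset.inter_assoc, Finset.inter_eq_right.2 (Finset.subset_biUnion_of_mem S hi)]
          at this
    rw [muP_congr p _ _ _ heq,
      muP_union p (S a) (t.biUnion S) hdis (P a) (fun G => ∀ i ∈ t, P i (G ∩ S i)), ih hd',
      Finset.prod_insert ha]

lemma muP_subset (p : ℝ) (B : Finset ℕ) :
    muP p B (fun A => B ⊆ A) = p ^ B.card := by
  have : (B.powerset.filter (fun A => B ⊆ A)) = {B} := by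
    ext A
    simp only [Finset.mem_filter, Finset.mem_powerset, Finset.mem_singleton]
    exact ⟨fun h => Finset.Subset.antisymm h.1 h.2, fun h => by simp [h]⟩
  simp [muP, this]

lemma muP_notsubset (p : ℝ) (B : Finset ℕ) :
    muP p B (fun A => ¬ B ⊆ A) = 1 - p ^ B.card := by
  have := muP_add_not p B (fun A => B ⊆ A)
  rw [muP_subset] at this
  linarith

lemma muP_nonempty (p : ℝ) (B : Finset ℕ) :
    muP p B (fun A => A.Nonempty) = 1 - (1-p) ^ B.card := by
  have h1 : muP p B (fun A => ¬ A.Nonempty) = (1-p) ^ B.card := by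
    have : (B.powerset.filter (fun A => ¬ A.Nonempty)) = {∅} := by
      ext A
      simp only [Finset.mem_filter, Finset.mem_powerset, Finset.mem_singleton,
        Finset.not_nonempty_iff_eq_empty]
      exact ⟨fun h => h.2, fun h => by simp [h]⟩
    simp only [muP]
    rw [this]
    simp
  have h2 := muP_add_not p B (fun A => A.Nonempty)
  rw [h1] at h2
  linarith

set_option maxHeartbeats 1000000 in
lemma numeric (α β : ℝ) (hα : α ∈ Set.Ioo (0:ℝ) 1) (hβ : β ∈ Set.Ioo (0:ℝ) 1)
    (hab : 1 < α + β) (ε : ℝ) (hε : 0 < ε) :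
    ∃ k m : ℕ, 1 ≤ k ∧ 1 ≤ m ∧
      1 - ε < (1 - (1 - α ^ k) ^ m) * (1 - (1 - β) ^ k) ^ m := by
  obtain ⟨hα0, hα1⟩ := hα
  obtain ⟨hβ0, hβ1⟩ := hβ
  set r : ℝ := (1 - β) / α with hr
  have hβ1' : 0 ≤ 1 - β := by linarith
  have hr0 : 0 ≤ r := div_nonneg hβ1' hα0.le
  have hr1 : r < 1 := (div_lt_one hα0).2 (by linarith)
  set ρ : ℝ := max r (1 - β) with hρ
  have hρ0 : 0 ≤ ρ := le_max_of_le_left hr0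
  have hρ1 : ρ < 1 := max_lt hr1 (by linarith)
  have htend := tendsto_pow_atTop_nhds_zero_of_lt_one hρ0 hρ1
  have hmin : (0:ℝ) < min (ε^2/32) (ε/8) := by
    apply lt_min <;> positivity
  obtain ⟨k, hk⟩ := ((htend.eventually_lt_const hmin).and
    (Filter.eventually_ge_atTop 1)).exists
  obtain ⟨hkρ, hk1⟩ := hk
  set c : ℝ := α ^ k with hc
  have hc0 : 0 < c := pow_pos hα0 k
  have hc1 : c ≤ 1 := pow_le_one₀ hα0.le hα1.le
  set x : ℝ := 4 / (ε * c) with hx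
  have hx0 : 0 < x := by positivity
  set m : ℕ := ⌈x⌉₊ with hm
  have hm1 : 1 ≤ m := Nat.one_le_iff_ne_zero.2 (by
    intro h0
    have := Nat.ceil_pos.2 hx0
    omega)
  have hmx : x ≤ (m:ℝ) := Nat.le_ceil x
  have hmx' : (m:ℝ) < x + 1 := Nat.ceil_lt_add_one hx0.le
  -- bound 1: (1-c)^m ≤ ε/4
  have hb1 : (1 - c) ^ m ≤ ε / 4 := by
    have hber : 1 + (m:ℝ) * c ≤ (1 + c) ^ m := one_add_mul_le_pow (by linarith) m
    have hsq : (1 - c) ^ m * (1 + c) ^ m = (1 - c^2) ^ m := by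
      rw [← mul_pow]; ring_nf
    have h1c : (0:ℝ) ≤ 1 - c := by linarith
    have hle1 : (1 - c^2) ^ m ≤ 1 := pow_le_one₀ (by nlinarith) (by nlinarith)
    have key : (1 - c) ^ m * (1 + (m:ℝ) * c) ≤ 1 := by
      calc (1 - c) ^ m * (1 + (m:ℝ) * c) ≤ (1 - c) ^ m * (1 + c) ^ m :=
            mul_le_mul_of_nonneg_left hber (pow_nonneg h1c m)
        _ = (1 - c^2) ^ m := hsq
        _ ≤ 1 := hle1
    have hmc' : 4 ≤ ε * ((m:ℝ) * c) := by
      have h0 : (0:ℝ) < ε * c := by positivity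
      have := (div_le_iff₀ h0).1 hmx
      nlinarith
    have hpm : (0:ℝ) ≤ (1 - c) ^ m := pow_nonneg h1c m
    have h1 : (1 - c) ^ m * 4 ≤ (1 - c) ^ m * (ε * ((m:ℝ) * c)) :=
      mul_le_mul_of_nonneg_left hmc' hpm
    have h2 : (1 - c) ^ m * ((m:ℝ) * c) ≤ 1 - (1 - c) ^ m := by nlinarith [key]
    have h3 : ε * ((1 - c) ^ m * ((m:ℝ) * c)) ≤ ε * (1 - (1 - c) ^ m) :=
      mul_le_mul_of_nonneg_left h2 hε.le
    nlinarith [mul_nonneg hε.le hpm]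
  -- bound 2: m * (1-β)^k ≤ ε/4
  have hb2 : (m:ℝ) * (1 - β) ^ k ≤ ε / 4 := by
    have h1 : (1 - β) ^ k ≤ ρ ^ k := pow_le_pow_left₀ hβ1' (le_max_right r (1-β)) k
    have h2 : r ^ k ≤ ρ ^ k := pow_le_pow_left₀ hr0 (le_max_left r (1-β)) k
    have hbk0 : (0:ℝ) ≤ (1 - β) ^ k := pow_nonneg hβ1' k
    have hstep : (m:ℝ) * (1 - β) ^ k ≤ (x + 1) * (1 - β) ^ k :=
      mul_le_mul_of_nonneg_right hmx'.le hbk0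
    have hxsplit : (x + 1) * (1 - β) ^ k = (4 / ε) * r ^ k + (1 - β) ^ k := by
      rw [hx, hr, div_pow]
      rw [hc]
      field_simp
    have hρk1 : ρ ^ k < ε^2/32 := lt_of_lt_of_le hkρ (min_le_left _ _)
    have hρk2 : ρ ^ k < ε/8 := lt_of_lt_of_le hkρ (min_le_right _ _)
    have hA : (4 / ε) * r ^ k ≤ ε / 8 := by
      have : (4 / ε) * r ^ k ≤ (4 / ε) * (ε^2/32) := by
        apply mul_le_mul_of_nonneg_left _ (by positivity)
        linarith
      have heq : (4 / ε) * (ε^2/32) = ε / 8 := by field_simp; ring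
      linarith
    have hB : (1 - β) ^ k ≤ ε / 8 := by linarith
    calc (m:ℝ) * (1 - β) ^ k ≤ (x + 1) * (1 - β) ^ k := hstep
      _ = (4 / ε) * r ^ k + (1 - β) ^ k := hxsplit
      _ ≤ ε / 8 + ε / 8 := by linarith
      _ = ε / 4 := by ring
  -- combine
  refine ⟨k, m, hk1, hm1, ?_⟩
  set P1 : ℝ := 1 - (1 - c) ^ m with hP1
  set P2 : ℝ := (1 - (1 - β) ^ k) ^ m with hP2
  have h1c : (0:ℝ) ≤ 1 - c := by linarith
  have hP1l : 1 - ε/4 ≤ P1 := by simp only [hP1]; linarith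
  have hP1u : P1 ≤ 1 := by
    have : (0:ℝ) ≤ (1 - c)^m := pow_nonneg h1c m
    simp only [hP1]; linarith
  have hbk1 : (1 - β) ^ k ≤ 1 := pow_le_one₀ hβ1' (by linarith)
  have hbk0 : (0:ℝ) ≤ (1 - β) ^ k := pow_nonneg hβ1' k
  have hP2l : 1 - ε/4 ≤ P2 := by
    have := one_add_mul_le_pow (a := -(1 - β)^k) (by linarith) m
    have heq : (1 + -(1-β)^k) ^ m = P2 := by rw [hP2]; ring_nf
    simp only [hP2]
    calc 1 - ε/4 ≤ 1 - (m:ℝ) * (1-β)^k := by linarith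
      _ = 1 + (m:ℝ) * (-(1-β)^k) := by ring
      _ ≤ (1 + -(1-β)^k) ^ m := this
      _ = (1 - (1-β)^k) ^ m := by ring_nf
  have hP2u : P2 ≤ 1 := pow_le_one₀ (by linarith) (by linarith)
  have hP20 : 0 ≤ P2 := pow_nonneg (by linarith) m
  have hP10 : 0 ≤ P1 := by
    have : (1 - c)^m ≤ 1 := pow_le_one₀ h1c (by linarith)
    simp only [hP1]; linarith
  have hfinal : (1 - P1) * (1 - P2) ≥ 0 := mul_nonneg (by linarith) (by linarith)
  nlinarith [hfinal, hP1l, hP2l, hε]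

def blk (k i : ℕ) : Finset ℕ := Finset.Icc (i*k+1) (i*k+k)

lemma blk_card (k i : ℕ) : (blk k i).card = k := by
  simp only [blk, Nat.card_Icc]; omega

lemma blk_disjoint (k m : ℕ) : ((Finset.range m : Finset ℕ) : Set ℕ).PairwiseDisjoint (blk k) := by
  have key : ∀ i j : ℕ, i < j → Disjoint (blk k i) (blk k j) := by
    intro i j hij
    rw [Finset.disjoint_left]
    intro x hx hx'
    simp only [blk, Finset.mem_Icc] at hx hx'
    have : (i+1) * k ≤ j * k := Nat.mul_le_mul_right k hij
    have : i * k + k ≤ j * k := by rw [add_one_mul] at this; omega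
    omega
  intro i _ j _ hij
  rcases lt_or_gt_of_ne hij with h | h
  · exact key i j h
  · exact (key j i h).symm

lemma blk_biUnion (k m : ℕ) : (Finset.range m).biUnion (blk k) = Finset.Icc 1 (m*k) := by
  induction m with
  | zero => simp
  | succ m ih =>
    rw [Finset.range_add_one, Finset.biUnion_insert, ih]
    ext x
    simp only [Finset.mem_union, Finset.mem_Icc, blk, Nat.succ_mul]
    have h := Nat.le_refl (m*k)
    omega

lemma exists_cross (α β : ℝ) (hα : α ∈ Set.Ioo (0:ℝ) 1) (hβ : β ∈ Set.Ioo (0:ℝ) 1)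
    (hab : 1 < α + β) (ε : ℝ) (hε : 0 < ε) :
    ∃ n : ℕ, 1 ≤ n ∧ ∃ A B : Finset (Finset ℕ),
      A ⊆ (Finset.Icc 1 n).powerset ∧ B ⊆ (Finset.Icc 1 n).powerset ∧
      (∀ a ∈ A, ∀ b ∈ B, (a ∩ b).Nonempty) ∧
      1 - ε < mu n α A * mu n β B := by
  obtain ⟨k, m, hk1, hm1, hnum⟩ := numeric α β hα hβ hab ε hε
  set n : ℕ := m * k with hn
  have hn1 : 1 ≤ n := Nat.one_le_iff_ne_zero.2 (by positivity)
  set U : Finset ℕ := Finset.Icc 1 n with hU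
  have hUb : U = (Finset.range m).biUnion (blk k) := by rw [hU, blk_biUnion]
  set PA : Finset ℕ → Prop := fun F => ∃ i ∈ Finset.range m, blk k i ⊆ F with hPA
  set PB : Finset ℕ → Prop := fun F => ∀ i ∈ Finset.range m, (F ∩ blk k i).Nonempty with hPB
  refine ⟨n, hn1, U.powerset.filter PA, U.powerset.filter PB,
    Finset.filter_subset _ _, Finset.filter_subset _ _, ?_, ?_⟩
  · intro a ha b hb
    rw [Finset.mem_filter] at ha hb
    obtain ⟨i, hi, hsub⟩ := ha.2
    obtain ⟨x, hx⟩ := hb.2 i hi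
    rw [Finset.mem_inter] at hx
    exact ⟨x, Finset.mem_inter.2 ⟨hsub hx.2, hx.1⟩⟩
  · have hUcard : U.card = n := by rw [hU, Nat.card_Icc]; omega
    have hmuA : mu n α (U.powerset.filter PA) = muP α U PA := by
      simp only [mu, muP, hUcard]
    have hmuB : mu n β (U.powerset.filter PB) = muP β U PB := by
      simp only [mu, muP, hUcard]
    have hA : muP α U PA = 1 - (1 - α ^ k) ^ m := by
      have hnot : muP α U (fun F => ¬ PA F)
          = muP α U (fun F => ∀ i ∈ Finset.range m, ¬ blk k i ⊆ (F ∩ blk k i)) := by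
        apply muP_congr
        intro F
        simp only [hPA, not_exists, not_and]
        constructor
        · intro h i hi hsub
          exact h i hi (hsub.trans Finset.inter_subset_left)
        · intro h i hi hsub
          exact h i hi (Finset.subset_inter_iff.2 ⟨hsub, Finset.Subset.refl _⟩)
      have hval : muP α U (fun F => ∀ i ∈ Finset.range m, ¬ blk k i ⊆ (F ∩ blk k i))
          = (1 - α ^ k) ^ m := by
        rw [hUb, muP_blocks α (blk k) (fun i A => ¬ blk k i ⊆ A) (Finset.range m)
          (blk_disjoint k m)]
        rw [Finset.prod_congr rfl (fun i _ => by rw [muP_notsubset, blk_card])]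
        rw [Finset.prod_const, Finset.card_range]
      have := muP_add_not α U PA
      rw [hnot, hval] at this
      linarith
    have hB : muP β U PB = (1 - (1 - β) ^ k) ^ m := by
      have : muP β U PB = muP β U (fun F => ∀ i ∈ Finset.range m, ((F ∩ blk k i)).Nonempty) := by
        apply muP_congr; intro F; simp [hPB]
      rw [this, hUb, muP_blocks β (blk k) (fun _ A => A.Nonempty) (Finset.range m)
        (blk_disjoint k m)]
      rw [Finset.prod_congr rfl (fun i _ => by rw [muP_nonempty, blk_card])]
      rw [Finset.prod_const, Finset.card_range]
    rw [hmuA, hmuB, hA, hB]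
    exact hnum


lemma mu_nonneg (n : ℕ) (p : ℝ) (hp0 : 0 ≤ p) (hp1 : p ≤ 1) (A : Finset (Finset ℕ)) :
    0 ≤ mu n p A := by
  apply Finset.sum_nonneg
  intro F _
  have : (0:ℝ) ≤ 1 - p := by linarith
  positivity

lemma mu_le_one (n : ℕ) (p : ℝ) (hp0 : 0 ≤ p) (hp1 : p ≤ 1)
    (A : Finset (Finset ℕ)) (hA : A ⊆ (Finset.Icc 1 n).powerset) :
    mu n p A ≤ 1 := by
  have hcard : (Finset.Icc 1 n).card = n := by rw [Nat.card_Icc]; omega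
  have htot := sum_w p (Finset.Icc 1 n)
  rw [hcard] at htot
  rw [← htot]
  apply Finset.sum_le_sum_of_subset_of_nonneg hA
  intro F _ _
  have : (0:ℝ) ≤ 1 - p := by linarith
  positivity

theorem stmt_10 (α β : ℝ)
    (hα : α ∈ Set.Ioo (0:ℝ) 1) (hβ : β ∈ Set.Ioo (0:ℝ) 1) (hab : 1 < α + β) :
    (⨆ n : ℕ, sSup (crossProdSet (n+1) α β)) = 1 ∧
      ∀ ε : ℝ, 0 < ε → ∃ (n : ℕ) (A B : Finset (Finset ℕ)),
        A ⊆ (Finset.Icc 1 n).powerset ∧ B ⊆ (Finset.Icc 1 n).powerset ∧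
        (∀ a ∈ A, ∀ b ∈ B, (a ∩ b).Nonempty) ∧
        1 - ε < mu n α A * mu n β B := by
  obtain ⟨hα0, hα1⟩ := hα
  obtain ⟨hβ0, hβ1⟩ := hβ
  have part2 : ∀ ε : ℝ, 0 < ε → ∃ (n : ℕ) (A B : Finset (Finset ℕ)),
      A ⊆ (Finset.Icc 1 n).powerset ∧ B ⊆ (Finset.Icc 1 n).powerset ∧
      (∀ a ∈ A, ∀ b ∈ B, (a ∩ b).Nonempty) ∧
      1 - ε < mu n α A * mu n β B := by
    intro ε hε
    obtain ⟨n, _, A, B, h1, h2, h3, h4⟩ :=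
      exists_cross α β ⟨hα0, hα1⟩ ⟨hβ0, hβ1⟩ hab ε hε
    exact ⟨n, A, B, h1, h2, h3, h4⟩
  have hbdd : ∀ N : ℕ, ∀ x ∈ crossProdSet N α β, x ≤ 1 := by
    rintro N x ⟨A, B, hA, hB, -, rfl⟩
    have h1 := mu_le_one N α hα0.le hα1.le A hA
    have h2 := mu_le_one N β hβ0.le hβ1.le B hB
    have h3 := mu_nonneg N α hα0.le hα1.le A
    have h4 := mu_nonneg N β hβ0.le hβ1.le B
    nlinarith
  have hsSup_le : ∀ n : ℕ, sSup (crossProdSet (n+1) α β) ≤ 1 := fun n =>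
    Real.sSup_le (hbdd (n+1)) one_pos.le
  refine ⟨le_antisymm (ciSup_le hsSup_le) ?_, part2⟩
  by_contra h
  push_neg at h
  set s := ⨆ n : ℕ, sSup (crossProdSet (n+1) α β) with hs
  obtain ⟨n, hn1, A, B, h1, h2, h3, h4⟩ :=
    exists_cross α β ⟨hα0, hα1⟩ ⟨hβ0, hβ1⟩ hab (1 - s) (by linarith)
  have hn' : n - 1 + 1 = n := Nat.succ_pred_eq_of_pos hn1
  have hxmem : mu n α A * mu n β B ∈ crossProdSet (n - 1 + 1) α β := by
    rw [hn']
    exact ⟨A, B, h1, h2, h3, rfl⟩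
  have hle1 : mu n α A * mu n β B ≤ sSup (crossProdSet (n - 1 + 1) α β) :=
    le_csSup ⟨1, fun y hy => hbdd _ y hy⟩ hxmem
  have hle2 : sSup (crossProdSet (n - 1 + 1) α β) ≤ s :=
    le_ciSup (f := fun n : ℕ => sSup (crossProdSet (n+1) α β))
      ⟨1, Set.forall_mem_range.2 hsSup_le⟩ (n - 1)
  have : 1 - (1 - s) < s := lt_of_lt_of_le h4 (hle1.trans hle2)
  linarith
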